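/- Let r = [r_0, ..., r_m] and c = [c_0, ..., c_n] be strictly increasing sequences of natural numbers, and let {r̂, ĉ} be an ordered sub-pair for {r, c} of length p+1 selected by index sequences α_0 < ... < α_p (rows) and β_0 < ... < β_p (columns), so r̂_i = r_{α_i} and ĉ_i = c_{β_i}. Let I_{r̂,ĉ} be the (m+1)×(n+1) matrix whose (α_i, β_i) entries are 1 for i = 0, ..., p and all other entries 0. Then rank(I_{r̂,ĉ}) = p+1 = rank(T_{r̂,ĉ}), where T_{r̂,ĉ} is the (p+1)×(p+1) matrix with (i,j) entry C(ĉ_j, r̂_i). Moreover, if {r̂, ĉ} is maximal, then rank(T_{r,c}) = rank(I_{r̂,ĉ}). -/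

import Mathlib

open Matrix Finset Submodule

lemma det_eq_zero_of_zero_block {q : ℕ} (M : Matrix (Fin q) (Fin q) ℚ) (k : Fin q)
    (h : ∀ i j : Fin q, k ≤ i → j ≤ k → M i j = 0) : M.det = 0 := by
  rw [Matrix.det_apply]
  refine Finset.sum_eq_zero fun σ _ => ?_
  have hex : ∃ j : Fin q, j ≤ k ∧ k ≤ σ j := by
    by_contra hcon
    push_neg at hcon
    have hinj : Set.InjOn σ (Finset.Iic k) := σ.injective.injOn
    have hmap : ∀ j ∈ Finset.Iic k, σ j ∈ Finset.Iio k := by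
      intro j hj
      exact Finset.mem_Iio.2 (hcon j (Finset.mem_Iic.1 hj))
    have hcard := Finset.card_le_card_of_injOn σ hmap hinj
    rw [Fin.card_Iic, Fin.card_Iio] at hcard
    omega
  obtain ⟨j, hj, hkj⟩ := hex
  rw [show (∏ i : Fin q, M (σ i) i) = 0 from
    Finset.prod_eq_zero (Finset.mem_univ j) (h _ _ hkj hj), smul_zero]

lemma pascal_det_pos_aux :
    ∀ (N q : ℕ) (r c : Fin q → ℕ), q + ∑ j, c j ≤ N →
      StrictMono r → StrictMono c → (∀ i, r i ≤ c i) →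
      0 < (Matrix.of fun i j : Fin q => ((c j).choose (r i) : ℚ)).det := by
  intro N
  induction N with
  | zero =>
      intro q r c hm _ _ _
      have hq : q = 0 := by omega
      subst hq
      simp [Matrix.det_isEmpty]
  | succ N ih =>
      intro q
      match q with
      | 0 => intro r c hm _ _ _; simp [Matrix.det_isEmpty]
      | q'+1 =>
        intro r c hm hr hc hst
        by_cases h0 : r 0 = c 0
        · -- peel off first row and column
          rw [Matrix.det_succ_column_zero]
          rw [Finset.sum_eq_single 0]
          · have h00 : (Matrix.of fun i j : Fin (q'+1) => ((c j).choose (r i) : ℚ)) 0 0 = 1 := by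
              simp [← h0]
            rw [h00]
            simp only [Fin.val_zero, pow_zero, one_mul, Fin.succAbove_zero]
            have hmin : ((Matrix.of fun i j : Fin (q'+1) => ((c j).choose (r i) : ℚ)).submatrix
                Fin.succ Fin.succ) =
                (Matrix.of fun i j : Fin q' => (((c ∘ Fin.succ) j).choose ((r ∘ Fin.succ) i) : ℚ)) := by
              ext i j; rfl
            rw [hmin]
            refine ih q' (r ∘ Fin.succ) (c ∘ Fin.succ) ?_ (hr.comp (Fin.strictMono_succ))
              (hc.comp (Fin.strictMono_succ)) (fun i => hst i.succ)
            have hsum : ∑ j : Fin (q'+1), c j = c 0 + ∑ j : Fin q', c j.succ := Fin.sum_univ_succ c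
            have : ∑ j : Fin q', (c ∘ Fin.succ) j = ∑ j : Fin q', c j.succ := rfl
            omega
          · intro i _ hi
            have : r 0 < r i := hr (Fin.pos_of_ne_zero hi)
            have : (c 0).choose (r i) = 0 := Nat.choose_eq_zero_of_lt (by omega)
            simp [this]
          · simp
        · -- Case B : r 0 < c 0, apply Pascal's rule to every row
          have h0' : r 0 < c 0 := lt_of_le_of_ne (hst 0) h0
          have hc1 : ∀ j, 1 ≤ c j := fun j => by
            have : c 0 ≤ c j := hc.monotone (Fin.zero_le j)
            omega
          have hcs : StrictMono (fun j : Fin (q'+1) => c j - 1) := by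
            intro a b hab
            have := hc hab
            have := hc1 a
            simp only
            omega
          have hmeas : (q'+1) + ∑ j, (c j - 1) ≤ N := by
            have hsum : ∑ j : Fin (q'+1), (c j - 1) + ∑ _j : Fin (q'+1), 1
                = ∑ j : Fin (q'+1), c j := by
              rw [← Finset.sum_add_distrib]
              exact Finset.sum_congr rfl fun j _ => by have := hc1 j; omega
            simp only [Finset.sum_const, Finset.card_univ, Fintype.card_fin, smul_eq_mul,
              mul_one] at hsum
            omega
          set m1 : Fin (q'+1) → Fin (q'+1) → ℚ :=
            fun i j => ((c j - 1).choose (r i) : ℚ) with hm1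
          set m2 : Fin (q'+1) → Fin (q'+1) → ℚ :=
            fun i j => if r i = 0 then 0 else ((c j - 1).choose (r i - 1) : ℚ) with hm2
          have hM : (Matrix.of fun i j : Fin (q'+1) => ((c j).choose (r i) : ℚ)) = m1 + m2 := by
            funext i j
            show ((c j).choose (r i) : ℚ) = m1 i j + m2 i j
            by_cases h : r i = 0
            · simp [hm1, hm2, h]
            · obtain ⟨k, hk⟩ := Nat.exists_eq_succ_of_ne_zero h
              obtain ⟨d, hd⟩ : ∃ d, c j = d + 1 := ⟨c j - 1, by have := hc1 j; omega⟩
              simp only [hm1, hm2, if_neg h, hk, hd, Nat.add_sub_cancel, Nat.succ_sub_one]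
              rw [Nat.choose_succ_succ]
              push_cast
              ring
          have expand : (Matrix.of fun i j : Fin (q'+1) => ((c j).choose (r i) : ℚ)).det
              = ∑ s : Finset (Fin (q'+1)), (Matrix.of (s.piecewise m1 m2)).det := by
            rw [hM]
            exact Matrix.detRowAlternating.toMultilinearMap.map_add_univ m1 m2
          rw [expand]
          have hentry : ∀ (s : Finset (Fin (q'+1))), (∀ i, i ∉ s → r i ≠ 0) →
              ∀ i j, (Matrix.of (s.piecewise m1 m2)) i j
                = (((c j - 1).choose (if i ∈ s then r i else r i - 1)) : ℚ) := by
            intro s hs i j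
            by_cases h : i ∈ s
            · simp [Finset.piecewise, h, hm1]
            · simp [Finset.piecewise, h, hm2, hs i h]
          -- every term is nonnegative
          have hterm : ∀ s : Finset (Fin (q'+1)), 0 ≤ (Matrix.of (s.piecewise m1 m2)).det := by
            intro s
            by_cases hz : ∃ i, i ∉ s ∧ r i = 0
            · obtain ⟨i, his, hri⟩ := hz
              have hdet : (Matrix.of (s.piecewise m1 m2)).det = 0 := by
                apply Matrix.det_eq_zero_of_row_eq_zero i
                intro j
                simp [Finset.piecewise, his, hm2, hri]
              rw [hdet]
            · push_neg at hz
              have hent := hentry s hz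
              set r' : Fin (q'+1) → ℕ := fun i => if i ∈ s then r i else r i - 1 with hr'
              have hmono : ∀ i i' : Fin (q'+1), i < i' → r' i ≤ r' i' := by
                intro i i' hii
                have := hr hii
                simp only [hr']
                split <;> split <;> omega
              by_cases hinj : Function.Injective r'
              · have hsm : StrictMono r' := fun i i' h =>
                  lt_of_le_of_ne (hmono _ _ h) fun e => (ne_of_lt h) (hinj e)
                by_cases hstc : ∀ i, r' i ≤ c i - 1
                · have hpos := ih (q'+1) r' (fun j => c j - 1) hmeas hsm hcs hstc
                  have heq : (Matrix.of (s.piecewise m1 m2))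
                      = (Matrix.of fun i j : Fin (q'+1) =>
                          (((fun j => c j - 1) j).choose (r' i) : ℚ)) := by
                    ext i j
                    exact hent i j
                  rw [heq]
                  exact le_of_lt hpos
                · push_neg at hstc
                  obtain ⟨k, hk⟩ := hstc
                  have hdet : (Matrix.of (s.piecewise m1 m2)).det = 0 := by
                    apply det_eq_zero_of_zero_block _ k
                    intro i j hki hjk
                    rw [hent i j]
                    have h1 : c j ≤ c k := hc.monotone hjk
                    have h2 : r' k ≤ r' i := by
                      rcases eq_or_lt_of_le hki with h | h
                      · exact le_of_eq (congrArg r' h)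
                      · exact hmono _ _ h
                    have h3 : (c j - 1) < (if i ∈ s then r i else r i - 1) := by
                      have : r' i = (if i ∈ s then r i else r i - 1) := rfl
                      omega
                    rw [Nat.choose_eq_zero_of_lt h3]
                    simp
                  rw [hdet]
              · obtain ⟨a, b, hrab, hab⟩ := Function.not_injective_iff.mp hinj
                have hdet : (Matrix.of (s.piecewise m1 m2)).det = 0 := by
                  apply Matrix.det_zero_of_row_eq hab
                  funext j
                  rw [hent a j, hent b j]
                  have hra : (if a ∈ s then r a else r a - 1) = (if b ∈ s then r b else r b - 1) := hrab
                  rw [hra]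
                rw [hdet]
          -- the term from the set of strict indices is positive
          set sstar : Finset (Fin (q'+1)) := Finset.univ.filter (fun i => r i < c i) with hsstar
          have hmem : ∀ i, (i ∈ sstar ↔ r i < c i) := by
            intro i; simp [hsstar]
          have h0mem : (0 : Fin (q'+1)) ∈ sstar := (hmem 0).2 h0'
          have htight : ∀ i, i ∉ sstar → r i = c i := fun i hi =>
            le_antisymm (hst i) (by have := (hmem i).not.1 hi; omega)
          have hz : ∀ i, i ∉ sstar → r i ≠ 0 := by
            intro i hi
            have h1 := htight i hi
            have h2 : i ≠ 0 := fun e => by rw [e] at h1; omega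
            have : c 0 < c i := hc (Fin.pos_of_ne_zero h2)
            omega
          have hent := hentry sstar hz
          set r' : Fin (q'+1) → ℕ := fun i => if i ∈ sstar then r i else r i - 1 with hr'
          have hsm : StrictMono r' := by
            intro i i' hii
            have hlt := hr hii
            have hci : c i < c i' := hc hii
            have hc1i := hc1 i
            simp only [hr']
            by_cases hi' : i' ∈ sstar
            · have := (hmem i').1 hi'
              rw [if_pos hi']
              split <;> omega
            · have ht' := htight i' hi'
              rw [if_neg hi']
              by_cases hi : i ∈ sstar
              · have := (hmem i).1 hi
                rw [if_pos hi]
                omega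
              · have := htight i hi
                rw [if_neg hi]
                omega
          have hstc : ∀ i, r' i ≤ c i - 1 := by
            intro i
            simp only [hr']
            by_cases hi : i ∈ sstar
            · have := (hmem i).1 hi
              rw [if_pos hi]
              omega
            · have := htight i hi
              rw [if_neg hi]
              omega
          have hpos : 0 < (Matrix.of (sstar.piecewise m1 m2)).det := by
            have hpos' := ih (q'+1) r' (fun j => c j - 1) hmeas hsm hcs hstc
            have heq : (Matrix.of (sstar.piecewise m1 m2))
                = (Matrix.of fun i j : Fin (q'+1) =>
                    (((fun j => c j - 1) j).choose (r' i) : ℚ)) := by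
              ext i j
              exact hent i j
            rw [heq]
            exact hpos'
          exact Finset.sum_pos' (fun s _ => hterm s) ⟨sstar, Finset.mem_univ _, hpos⟩


lemma rank_submatrix_le_rect {M N a b : ℕ} (A : Matrix (Fin M) (Fin N) ℚ)
    (f : Fin a → Fin M) (g : Fin b → Fin N) : (A.submatrix f g).rank ≤ A.rank := by
  rw [Matrix.rank_eq_finrank_span_cols, Matrix.rank_eq_finrank_span_cols]
  have h1 : Submodule.span ℚ (Set.range (A.submatrix f g)ᵀ)
      ≤ (Submodule.span ℚ (Set.range Aᵀ)).map (LinearMap.funLeft ℚ ℚ f) := by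
    rw [Submodule.span_le]
    rintro _ ⟨j, rfl⟩
    exact ⟨Aᵀ (g j), Submodule.subset_span ⟨g j, rfl⟩, rfl⟩
  exact le_trans (Submodule.finrank_mono h1) (Submodule.finrank_map_le _ _)

lemma exists_strictMono_cols {M N k : ℕ} (A : Matrix (Fin M) (Fin N) ℚ) (h : k ≤ A.rank) :
    ∃ g : Fin k → Fin N, StrictMono g ∧ LinearIndependent ℚ (fun i => Aᵀ (g i)) := by
  classical
  match k, h with
  | 0, h =>
      refine ⟨fun i => i.elim0, fun i => i.elim0, ?_⟩
      exact linearIndependent_empty_type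
  | k+1, h =>
      have hN : 0 < N := by
        by_contra hN
        have : N = 0 := by omega
        subst this
        have := A.rank_le_card_width
        simp at this
        omega
      obtain ⟨b, hbsub, hbspan, hbind⟩ := exists_linearIndependent ℚ (Set.range Aᵀ)
      have hbfin : b.Finite := (Set.finite_range Aᵀ).subset hbsub
      haveI := hbfin.fintype
      have hcard : k + 1 ≤ b.toFinset.card := by
        have h2 : Module.finrank ℚ (span ℚ b) = b.toFinset.card :=
          finrank_span_set_eq_card hbind
      -- fix?
        rw [Matrix.rank_eq_finrank_span_cols] at h
        change k + 1 ≤ Module.finrank ℚ (span ℚ (Set.range Aᵀ)) at h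
        rw [← hbspan] at h
        omega
      set φ : (Fin M → ℚ) → Fin N := fun v =>
        if hv : ∃ j, Aᵀ j = v then hv.choose else ⟨0, hN⟩ with hφdef
      have hφ : ∀ v ∈ b, Aᵀ (φ v) = v := by
        intro v hv
        obtain ⟨j, hj⟩ := hbsub hv
        have hex : ∃ j, Aᵀ j = v := ⟨j, hj⟩
        simp only [hφdef, dif_pos hex]
        exact hex.choose_spec
      set J : Finset (Fin N) := b.toFinset.image φ with hJdef
      have hJcard : k + 1 ≤ J.card := by
        rw [hJdef, Finset.card_image_of_injOn]
        · exact hcard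
        · intro v hv w hw hvw
          rw [← hφ v (Set.mem_toFinset.1 hv), ← hφ w (Set.mem_toFinset.1 hw), hvw]
      obtain ⟨J', hJ'sub, hJ'card⟩ := Finset.exists_subset_card_eq (s := J) (n := k+1) hJcard
      have g0 := J'.orderIsoOfFin hJ'card
      refine ⟨fun i => (g0 i : Fin N), ?_, ?_⟩
      · intro i j hij
        exact g0.strictMono hij
      · have hmemb : ∀ i : Fin (k+1), Aᵀ ((g0 i : Fin N)) ∈ b := by
          intro i
          have : (g0 i : Fin N) ∈ J := hJ'sub (g0 i).2
          rw [hJdef] at this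
          obtain ⟨v, hv, hveq⟩ := Finset.mem_image.1 this
          rw [← hveq, hφ v (Set.mem_toFinset.1 hv)]
          exact Set.mem_toFinset.1 hv
        set e : Fin (k+1) → b := fun i => ⟨Aᵀ ((g0 i : Fin N)), hmemb i⟩ with hedef
        have heinj : Function.Injective e := by
          intro i j hij
          have hvij : Aᵀ ((g0 i : Fin N)) = Aᵀ ((g0 j : Fin N)) := congrArg Subtype.val hij
          -- columns in J' come from distinct b elements
          have hgi : (g0 i : Fin N) ∈ J := hJ'sub (g0 i).2
          have hgj : (g0 j : Fin N) ∈ J := hJ'sub (g0 j).2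
          rw [hJdef] at hgi hgj
          obtain ⟨v, hv, hveq⟩ := Finset.mem_image.1 hgi
          obtain ⟨w, hw, hweq⟩ := Finset.mem_image.1 hgj
          have h1 : Aᵀ ((g0 i : Fin N)) = v := by rw [← hveq, hφ v (Set.mem_toFinset.1 hv)]
          have h2 : Aᵀ ((g0 j : Fin N)) = w := by rw [← hweq, hφ w (Set.mem_toFinset.1 hw)]
          have hvweq : v = w := by rw [← h1, ← h2, hvij]
          have : (g0 i : Fin N) = (g0 j : Fin N) := by rw [← hveq, ← hweq, hvweq]
          have := Subtype.ext this
          exact g0.injective this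
        exact hbind.comp e heinj

lemma rank_indexMatrix {m n p : ℕ} (α β : ℕ → ℕ)
    (hα : StrictMonoOn α (Set.Iic p)) (hβ : StrictMonoOn β (Set.Iic p))
    (hαm : α p ≤ m) (hβn : β p ≤ n)
    (I : Matrix (Fin (m + 1)) (Fin (n + 1)) ℚ)
    (hI : ∀ a b, I a b =
      if ∃ i ≤ p, α i = (a : ℕ) ∧ β i = (b : ℕ) then 1 else 0) :
    I.rank = p + 1 := by
  classical
  have hmemIic : ∀ i : Fin (p+1), (i : ℕ) ∈ Set.Iic p := fun i => Fin.is_le i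
  have hαle : ∀ i : Fin (p+1), α i ≤ m := fun i =>
    le_trans (hα.monotoneOn (hmemIic i) (Set.mem_Iic.2 le_rfl) (Fin.is_le i)) hαm
  have hβle : ∀ i : Fin (p+1), β i ≤ n := fun i =>
    le_trans (hβ.monotoneOn (hmemIic i) (Set.mem_Iic.2 le_rfl) (Fin.is_le i)) hβn
  set αF : Fin (p+1) → Fin (m+1) := fun i => ⟨α i, by have := hαle i; omega⟩ with hαF
  set βF : Fin (p+1) → Fin (n+1) := fun i => ⟨β i, by have := hβle i; omega⟩ with hβF
  set e : Fin (p+1) → (Fin (m+1) → ℚ) := fun i => Pi.single (αF i) 1 with he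
  have hcol : ∀ i : Fin (p+1), Iᵀ (βF i) = e i := by
    intro i
    funext a
    rw [Matrix.transpose_apply, hI]
    have hiff : (∃ i' ≤ p, α i' = (a : ℕ) ∧ β i' = ((βF i : Fin (n+1)) : ℕ)) ↔ a = αF i := by
      constructor
      · rintro ⟨i', hi'p, hαi', hβi'⟩
        have : i' = (i : ℕ) := hβ.injOn (Set.mem_Iic.2 hi'p) (hmemIic i) hβi'
        subst this
        exact Fin.ext hαi'.symm
      · rintro rfl
        exact ⟨i, Fin.is_le i, rfl, rfl⟩
    rw [he]
    simp only [Pi.single_apply]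
    by_cases hcase : a = αF i
    · rw [if_pos (hiff.2 hcase), if_pos hcase]
    · rw [if_neg (fun h => hcase (hiff.1 h)), if_neg hcase]
  have hspan : Submodule.span ℚ (Set.range Iᵀ) = Submodule.span ℚ (Set.range e) := by
    apply le_antisymm
    · rw [Submodule.span_le]
      rintro _ ⟨b, rfl⟩
      by_cases hb : ∃ i ≤ p, β i = (b : ℕ)
      · obtain ⟨i, hip, hib⟩ := hb
        have hbeq : b = βF ⟨i, by omega⟩ := Fin.ext (by simp [hβF, hib])
        rw [hbeq, hcol]
        exact Submodule.subset_span ⟨_, rfl⟩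
      · have : Iᵀ b = 0 := by
          funext a
          rw [Matrix.transpose_apply, hI, if_neg, Pi.zero_apply]
          rintro ⟨i, hip, -, hiβ⟩
          exact hb ⟨i, hip, hiβ⟩
        rw [this]
        exact Submodule.zero_mem _
    · rw [Submodule.span_le]
      rintro _ ⟨i, rfl⟩
      rw [← hcol i]
      exact Submodule.subset_span ⟨_, rfl⟩
  have hαFinj : Function.Injective αF := by
    intro i j hij
    have : α i = α j := congrArg Fin.val hij
    have := hα.injOn (hmemIic i) (hmemIic j) this
    exact Fin.ext this
  have hind : LinearIndependent ℚ e := by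
    have hb := (Pi.basisFun ℚ (Fin (m+1))).linearIndependent
    have := hb.comp αF hαFinj
    convert this using 1
    funext i
    simp [he, Pi.basisFun_apply]
  rw [Matrix.rank_eq_finrank_span_cols]
  show Module.finrank ℚ (span ℚ (Set.range Iᵀ)) = p + 1
  rw [hspan, finrank_span_eq_card hind]
  simp

lemma pascal_det_pos (q : ℕ) (r c : Fin q → ℕ) (hr : StrictMono r) (hc : StrictMono c)
    (hst : ∀ i, r i ≤ c i) :
    0 < (Matrix.of fun i j : Fin q => ((c j).choose (r i) : ℚ)).det :=
  pascal_det_pos_aux (q + ∑ j, c j) q r c le_rfl hr hc hst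


/-- The submatrix of the Pascal upper-triangular matrix with rows
`r 0, …, r m` and columns `c 0, …, c n`: its `(i,j)` entry is the binomial
coefficient `C(c j, r i)` (which is `0` when `r i > c j`). -/
def pascalSub (r c : ℕ → ℕ) (m n : ℕ) : Matrix (Fin (m + 1)) (Fin (n + 1)) ℚ :=
  Matrix.of fun i j => ((c (j : ℕ)).choose (r (i : ℕ)) : ℚ)

/-- `{r ∘ α, c ∘ β}` (restricted to indices `0, …, p`) is an ordered sub-pair of
length `p + 1` for the pair of finite sequences `[r 0, …, r m]`, `[c 0, …, c n]`:
`α` and `β` are strictly increasing selections of indices (so `r ∘ α` is a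
subsequence of `[r 0, …, r m]` and `c ∘ β` is a subsequence of `[c 0, …, c n]`)
and `r (α i) ≤ c (β i)` for all `i = 0, …, p`. -/
def OrderedSubPair (r c : ℕ → ℕ) (m n p : ℕ) (α β : ℕ → ℕ) : Prop :=
  StrictMonoOn α (Set.Iic p) ∧ StrictMonoOn β (Set.Iic p) ∧
    α p ≤ m ∧ β p ≤ n ∧ ∀ i ≤ p, r (α i) ≤ c (β i)

open Classical in
/-- Let `{r ∘ α, c ∘ β}` be an ordered sub-pair of length `p + 1` for
`{[r 0, …, r m], [c 0, …, c n]}`, and let `I` be the `(m+1) × (n+1)` matrix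
with entry `1` at the positions `(α i, β i)` for `i = 0, …, p` and `0`
elsewhere.  Then `rank I = p + 1 = rank T_{r̂,ĉ}`; moreover, if the sub-pair is
maximal then `rank T_{r,c} = rank I`. -/
theorem pascal_rank_eq_rank_indexMatrix
    (m n p : ℕ) (r c α β : ℕ → ℕ) (hr : StrictMono r) (hc : StrictMono c)
    (hsub : OrderedSubPair r c m n p α β)
    (I : Matrix (Fin (m + 1)) (Fin (n + 1)) ℚ)
    (hI : ∀ a b, I a b =
      if ∃ i ≤ p, α i = (a : ℕ) ∧ β i = (b : ℕ) then 1 else 0) :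
    I.rank = p + 1 ∧
    (Matrix.of fun i j : Fin (p + 1) =>
        ((c (β (j : ℕ))).choose (r (α (i : ℕ))) : ℚ)).rank = p + 1 ∧
    ((∀ (q : ℕ) (α' β' : ℕ → ℕ), OrderedSubPair r c m n q α' β' → q ≤ p) →
      (pascalSub r c m n).rank = I.rank) := by
  obtain ⟨hα, hβ, hαm, hβn, hstair⟩ := hsub
  have hmemIic : ∀ {q : ℕ} (i : Fin (q+1)), (i : ℕ) ∈ Set.Iic q := fun i => Fin.is_le i
  -- Part 1 : rank of the index matrix
  have part1 : I.rank = p + 1 := rank_indexMatrix α β hα hβ hαm hβn I hI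
  -- Part 2 : rank of the square Pascal submatrix
  set T : Matrix (Fin (p+1)) (Fin (p+1)) ℚ :=
    Matrix.of fun i j : Fin (p + 1) =>
      ((c (β (j : ℕ))).choose (r (α (i : ℕ))) : ℚ) with hT
  have hrF : StrictMono (fun i : Fin (p+1) => r (α (i : ℕ))) := by
    intro i j hij
    exact hr (hα (hmemIic i) (hmemIic j) hij)
  have hcF : StrictMono (fun j : Fin (p+1) => c (β (j : ℕ))) := by
    intro i j hij
    exact hc (hβ (hmemIic i) (hmemIic j) hij)
  have hstF : ∀ i : Fin (p+1), r (α (i : ℕ)) ≤ c (β (i : ℕ)) := fun i =>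
    hstair (i : ℕ) (Fin.is_le i)
  have hdetT : 0 < T.det :=
    pascal_det_pos (p+1) (fun i => r (α (i : ℕ))) (fun j => c (β (j : ℕ))) hrF hcF hstF
  have hTU : IsUnit T := (Matrix.isUnit_iff_isUnit_det T).2 (isUnit_iff_ne_zero.2 (ne_of_gt hdetT))
  have part2 : T.rank = p + 1 := by
    rw [Matrix.rank_of_isUnit T hTU, Fintype.card_fin]
  refine ⟨part1, part2, ?_⟩
  -- Part 3 : maximality
  intro hmax
  set A : Matrix (Fin (m+1)) (Fin (n+1)) ℚ := pascalSub r c m n with hA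
  -- lower bound
  have hαle : ∀ i : Fin (p+1), α i ≤ m := fun i =>
    le_trans (hα.monotoneOn (hmemIic i) (Set.mem_Iic.2 le_rfl) (Fin.is_le i)) hαm
  have hβle : ∀ i : Fin (p+1), β i ≤ n := fun i =>
    le_trans (hβ.monotoneOn (hmemIic i) (Set.mem_Iic.2 le_rfl) (Fin.is_le i)) hβn
  set αF : Fin (p+1) → Fin (m+1) := fun i => ⟨α i, by have := hαle i; omega⟩ with hαF
  set βF : Fin (p+1) → Fin (n+1) := fun i => ⟨β i, by have := hβle i; omega⟩ with hβF
  have hsubm : A.submatrix αF βF = T := by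
    ext i j
    rfl
  have hge : p + 1 ≤ A.rank := by
    calc p + 1 = (A.submatrix αF βF).rank := by rw [hsubm, part2]
    _ ≤ A.rank := rank_submatrix_le_rect A αF βF
  -- upper bound
  have hub : A.rank ≤ p + 1 := by
    by_contra hcon
    push_neg at hcon
    have h2 : p + 2 ≤ A.rank := hcon
    obtain ⟨g, hg, hgind⟩ := exists_strictMono_cols A h2
    set B : Matrix (Fin (m+1)) (Fin (p+2)) ℚ := A.submatrix id g with hB
    have hBrank : B.rank = p + 2 := by
      rw [Matrix.rank_eq_finrank_span_cols]
      have hBT : Bᵀ = fun j => Aᵀ (g j) := rfl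
      show Module.finrank ℚ (span ℚ (Set.range Bᵀ)) = p + 2
      rw [hBT, finrank_span_eq_card hgind, Fintype.card_fin]
    have hBTrank : p + 2 ≤ Bᵀ.rank := by
      rw [Matrix.rank_transpose, hBrank]
    obtain ⟨f, hf, hfind⟩ := exists_strictMono_cols Bᵀ hBTrank
    set C : Matrix (Fin (p+2)) (Fin (p+2)) ℚ := B.submatrix f id with hC
    have hrows : LinearIndependent ℚ (fun i => C i) := hfind
    have hCU : IsUnit C := Matrix.linearIndependent_rows_iff_isUnit.1 hrows
    have hCdet : C.det ≠ 0 := ((Matrix.isUnit_iff_isUnit_det C).1 hCU).ne_zero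
    have hstairC : ∀ i : Fin (p+2), r ((f i : ℕ)) ≤ c ((g i : ℕ)) := by
      by_contra hcon2
      push_neg at hcon2
      obtain ⟨k, hk⟩ := hcon2
      apply hCdet
      apply det_eq_zero_of_zero_block C k
      intro i j hki hjk
      have h1 : (g j : ℕ) ≤ (g k : ℕ) := hg.monotone hjk
      have h2' : (f k : ℕ) ≤ (f i : ℕ) := hf.monotone hki
      have h3 : c ((g j : ℕ)) ≤ c ((g k : ℕ)) := hc.monotone h1
      have h4 : r ((f k : ℕ)) ≤ r ((f i : ℕ)) := hr.monotone h2'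
      show ((c ((g j : ℕ))).choose (r ((f i : ℕ))) : ℚ) = 0
      rw [Nat.choose_eq_zero_of_lt (by omega)]
      simp
    set α' : ℕ → ℕ := fun i => if h : i < p+2 then ((f ⟨i, h⟩ : Fin (m+1)) : ℕ) else m + 1 + i
      with hα'
    set β' : ℕ → ℕ := fun i => if h : i < p+2 then ((g ⟨i, h⟩ : Fin (n+1)) : ℕ) else n + 1 + i
      with hβ'
    have hOSP : OrderedSubPair r c m n (p+1) α' β' := by
      refine ⟨?_, ?_, ?_, ?_, ?_⟩
      · intro i hi j hj hij
        have hi2 : i < p + 2 := by have := Set.mem_Iic.1 hi; omega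
        have hj2 : j < p + 2 := by have := Set.mem_Iic.1 hj; omega
        simp only [hα', dif_pos hi2, dif_pos hj2]
        exact hf (show (⟨i, hi2⟩ : Fin (p+2)) < ⟨j, hj2⟩ from hij)
      · intro i hi j hj hij
        have hi2 : i < p + 2 := by have := Set.mem_Iic.1 hi; omega
        have hj2 : j < p + 2 := by have := Set.mem_Iic.1 hj; omega
        simp only [hβ', dif_pos hi2, dif_pos hj2]
        exact hg (show (⟨i, hi2⟩ : Fin (p+2)) < ⟨j, hj2⟩ from hij)
      · have h5 : p + 1 < p + 2 := by omega
        simp only [hα', dif_pos h5]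
        exact Fin.is_le _
      · have h5 : p + 1 < p + 2 := by omega
        simp only [hβ', dif_pos h5]
        exact Fin.is_le _
      · intro i hi
        have hi2 : i < p + 2 := by omega
        simp only [hα', hβ', dif_pos hi2]
        exact hstairC ⟨i, hi2⟩
    have := hmax (p+1) α' β' hOSP
    omega
  rw [part1, show A.rank = p + 1 from le_antisymm hub hge]
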